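/- Detailed balance holds for the discrete model: for all x, y ∈ Δ_M^(N), μ_{M,α}^(N)(x) q_{x,y} = μ_{M,α}^(N)(y) q_{y,x}; in particular the chain generated by A_{M,α}^(N) is reversible with respect to μ_{M,α}^(N). -/

import Mathlib

noncomputable section

/-- Ascending factorial [a]_m = a(a+1)⋯(a+m−1). -/
def ascFac (a : ℝ) (m : ℕ) : ℝ := (ascPochhammer ℝ m).eval a

/-- States of the discrete model, encoded by the counts m = M·x ∈ ℤ_+^N with Σ m_i ≤ M. -/
def statesD (N M : ℕ) : Finset (Fin N → ℕ) :=
  (Fintype.piFinset fun _ : Fin N => Finset.range (M + 1)).filter fun m => ∑ i, m i ≤ M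

/-- Unnormalized stationary weight. -/
def wD (N M : ℕ) (α : Fin (N + 1) → ℝ) (m : Fin N → ℕ) : ℝ :=
  ascFac (α (Fin.last N)) (M - ∑ i, m i) / (Nat.factorial (M - ∑ i, m i))
    * ∏ i, ascFac (α (Fin.castSucc i)) (m i) / (Nat.factorial (m i))

/-- Normalizing constant. -/
def ZD (N M : ℕ) (α : Fin (N + 1) → ℝ) : ℝ := ∑ m ∈ statesD N M, wD N M α m

/-- The stationary distribution μ_{M,α}^(N). -/
def muD (N M : ℕ) (α : Fin (N + 1) → ℝ) (m : Fin N → ℕ) : ℝ := wD N M α m / ZD N M α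

def upD (N : ℕ) (m : Fin N → ℕ) (i : Fin N) : Fin N → ℕ := Function.update m i (m i + 1)

def downD (N : ℕ) (m : Fin N → ℕ) (i : Fin N) : Fin N → ℕ := Function.update m i (m i - 1)

/-- Transition rates of the Markov chain (in the count coordinates m = M·x):
q(m, m−e_i) = m_i α_{N+1} + m_i (M−|m|₁),  q(m, m+e_i) = α_i (M−|m|₁) + m_i (M−|m|₁). -/
def qD (N M : ℕ) (α : Fin (N + 1) → ℝ) (m m' : Fin N → ℕ) : ℝ :=
  ∑ i, ((if m' = downD N m i ∧ 1 ≤ m i then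
          (m i : ℝ) * α (Fin.last N) + (m i : ℝ) * ((M - ∑ j, m j : ℕ) : ℝ) else 0)
      + (if m' = upD N m i then
          α (Fin.castSucc i) * ((M - ∑ j, m j : ℕ) : ℝ)
            + (m i : ℝ) * ((M - ∑ j, m j : ℕ) : ℝ) else 0))

lemma ascFac_succ (a : ℝ) (n : ℕ) : ascFac a (n + 1) = ascFac a n * (a + n) := by
  unfold ascFac
  rw [ascPochhammer_succ_right]
  simp

lemma sum_upD (N : ℕ) (m : Fin N → ℕ) (i : Fin N) :
    ∑ j, upD N m i j = (∑ j, m j) + 1 := by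
  unfold upD
  rw [Finset.sum_update_of_mem (Finset.mem_univ i), ← Finset.erase_eq,
    ← Finset.add_sum_erase _ m (Finset.mem_univ i)]
  omega

lemma up_down_iff (N : ℕ) (m m' : Fin N → ℕ) (i : Fin N) :
    m' = upD N m i ↔ (m = downD N m' i ∧ 1 ≤ m' i) := by
  constructor
  · rintro rfl
    refine ⟨funext fun j => ?_, by simp [upD]⟩
    by_cases hj : j = i <;> simp [upD, downD, Function.update_apply, hj]
  · rintro ⟨rfl, h1⟩
    funext j
    by_cases hj : j = i <;> simp [upD, downD, Function.update_apply, hj]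
    omega

lemma wD_balance (N M : ℕ) (α : Fin (N + 1) → ℝ) (m : Fin N → ℕ) (i : Fin N)
    (h : (∑ j, m j) + 1 ≤ M) :
    wD N M α m * (α (Fin.castSucc i) * ((M - ∑ j, m j : ℕ) : ℝ)
        + (m i : ℝ) * ((M - ∑ j, m j : ℕ) : ℝ))
    = wD N M α (upD N m i) * (((m i + 1 : ℕ) : ℝ) * α (Fin.last N)
        + ((m i + 1 : ℕ) : ℝ) * ((M - ((∑ j, m j) + 1) : ℕ) : ℝ)) := by
  unfold wD
  rw [sum_upD]
  have herase : ∏ j ∈ Finset.univ.erase i,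
      ascFac (α (Fin.castSucc j)) (upD N m i j) / (Nat.factorial (upD N m i j) : ℝ)
      = ∏ j ∈ Finset.univ.erase i,
      ascFac (α (Fin.castSucc j)) (m j) / (Nat.factorial (m j) : ℝ) :=
    Finset.prod_congr rfl fun j hj => by
      simp [upD, Function.update_apply, Finset.ne_of_mem_erase hj]
  rw [← Finset.mul_prod_erase Finset.univ
      (fun j => ascFac (α (Fin.castSucc j)) (upD N m i j) / (Nat.factorial (upD N m i j) : ℝ))
      (Finset.mem_univ i),
    ← Finset.mul_prod_erase Finset.univ
      (fun j => ascFac (α (Fin.castSucc j)) (m j) / (Nat.factorial (m j) : ℝ))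
      (Finset.mem_univ i), herase]
  have hii : upD N m i i = m i + 1 := by simp [upD]
  simp only [hii]
  have ht1 : M - ∑ j, m j = (M - ((∑ j, m j) + 1)) + 1 := by omega
  rw [ht1]
  generalize M - ((∑ j, m j) + 1) = t
  rw [ascFac_succ (α (Fin.last N)) t, ascFac_succ (α (Fin.castSucc i)) (m i),
    Nat.factorial_succ t, Nat.factorial_succ (m i)]
  have h1 : ((Nat.factorial t : ℕ) : ℝ) ≠ 0 := Nat.cast_ne_zero.mpr (Nat.factorial_ne_zero _)
  have h2 : ((Nat.factorial (m i) : ℕ) : ℝ) ≠ 0 := Nat.cast_ne_zero.mpr (Nat.factorial_ne_zero _)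
  have h3 : ((m i : ℝ) + 1) ≠ 0 := by positivity
  have h4 : ((t : ℝ) + 1) ≠ 0 := by positivity
  push_cast
  field_simp

lemma key_balance (N M : ℕ) (α : Fin (N + 1) → ℝ) (m m' : Fin N → ℕ) (i : Fin N)
    (hm' : ∑ j, m' j ≤ M) :
    wD N M α m * (if m' = upD N m i then
        α (Fin.castSucc i) * ((M - ∑ j, m j : ℕ) : ℝ)
          + (m i : ℝ) * ((M - ∑ j, m j : ℕ) : ℝ) else 0)
    = wD N M α m' * (if m = downD N m' i ∧ 1 ≤ m' i then
        (m' i : ℝ) * α (Fin.last N) + (m' i : ℝ) * ((M - ∑ j, m' j : ℕ) : ℝ) else 0) := by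
  by_cases h : m' = upD N m i
  · rw [if_pos h, if_pos ((up_down_iff N m m' i).mp h)]
    subst h
    rw [sum_upD] at hm' ⊢
    have hii : upD N m i i = m i + 1 := by simp [upD]
    rw [hii]
    exact wD_balance N M α m i hm'
  · rw [if_neg h, if_neg (fun hc => h ((up_down_iff N m m' i).mpr hc)), mul_zero, mul_zero]

/-- Detailed balance: μ_{M,α}^(N)(x) q_{x,y} = μ_{M,α}^(N)(y) q_{y,x} for all states x, y;
i.e. the chain generated by A_{M,α}^(N) is reversible with respect to μ_{M,α}^(N). -/
theorem discrete_detailed_balance (N M : ℕ) (hN : 1 ≤ N) (hM : N + 1 ≤ M)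
    (α : Fin (N + 1) → ℝ) (hα : ∀ k, 0 < α k) (m m' : Fin N → ℕ)
    (hm : ∑ i, m i ≤ M) (hm' : ∑ i, m' i ≤ M) :
    muD N M α m * qD N M α m m' = muD N M α m' * qD N M α m' m := by
  have key : wD N M α m * qD N M α m m' = wD N M α m' * qD N M α m' m := by
    unfold qD
    rw [Finset.mul_sum, Finset.mul_sum]
    refine Finset.sum_congr rfl fun i _ => ?_
    rw [mul_add, mul_add, key_balance N M α m m' i hm', ← key_balance N M α m' m i hm]
    ring
  unfold muD
  rw [div_mul_eq_mul_div, div_mul_eq_mul_div, key]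

end
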